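/- Assume additionally (Monotonicity) W1 ≥ W0 P-almost surely. Then the subdistribution of the treated potential outcome among compliers is identified: for every y ∈ ℝ, E[W·1{Y ≤ y} | Z = 1] − E[W·1{Y ≤ y} | Z = 0] = P({Y1 ≤ y} ∩ C). -/

import Mathlib

open MeasureTheory ProbabilityTheory

/-- Conditional mean given an event: `E[U | A] := E[U · 1_A] / P(A)`. -/
noncomputable def condMean {Ω : Type*} [MeasurableSpace Ω] (P : Measure Ω)
    (U : Ω → ℝ) (A : Set Ω) : ℝ :=
  (∫ ω in A, U ω ∂P) / (P A).toReal

lemma condMean_eq_integral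
    {Ω : Type*} [MeasurableSpace Ω] (P : Measure Ω) [IsProbabilityMeasure P]
    (f g : Ω → ℝ) (A : Set Ω) (hA : MeasurableSet A)
    (hPA : P A ≠ 0)
    (heq : ∀ ω ∈ A, f ω = g ω)
    (hg : AEStronglyMeasurable g P)
    (hindep : IndepFun (A.indicator (fun _ => (1:ℝ))) g P) :
    condMean P f A = ∫ ω, g ω ∂P := by
  unfold condMean
  rw [setIntegral_congr_fun hA heq, ← integral_indicator hA]
  have hprod : A.indicator g = fun ω => (A.indicator (fun _ => (1:ℝ)) ω) * g ω := by
    ext ω; by_cases h : ω ∈ A <;> simp [Set.indicator, h]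
  rw [hprod]
  have this2 : (fun ω => (A.indicator (fun _ => (1:ℝ)) ω) * g ω)
      = (A.indicator (fun _ => (1:ℝ))) * g := rfl
  rw [this2, hindep.integral_mul_eq_mul_integral (aestronglyMeasurable_const.indicator hA) hg]
  have hone : ∫ ω, (A.indicator (fun _ => (1:ℝ))) ω ∂P = (P A).toReal := by
    exact integral_indicator_one (μ := P) hA
  rw [hone]
  have hne : (P A).toReal ≠ 0 := by
    simp [ENNReal.toReal_ne_zero, hPA, measure_ne_top P A]
  rw [mul_comm, mul_div_assoc, div_self hne, mul_one]

/-- The subdistribution of the treated potential outcome among compliers is identified: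
`E[W·1{Y ≤ y} | Z = 1] − E[W·1{Y ≤ y} | Z = 0] = P({Y1 ≤ y} ∩ C)`. -/
theorem treated_subdistribution_identified
    {Ω : Type*} [MeasurableSpace Ω] (P : Measure Ω) [IsProbabilityMeasure P]
    (Z W0 W1 Y0 Y1 : Ω → ℝ)
    (hZ : Measurable Z) (hW0 : Measurable W0) (hW1 : Measurable W1)
    (hY0 : Measurable Y0) (hY1 : Measurable Y1)
    (hZbin : ∀ ω, Z ω = 0 ∨ Z ω = 1)
    (hW0bin : ∀ ω, W0 ω = 0 ∨ W0 ω = 1)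
    (hW1bin : ∀ ω, W1 ω = 0 ∨ W1 ω = 1)
    (W Y : Ω → ℝ)
    (hWdef : ∀ ω, W ω = Z ω * W1 ω + (1 - Z ω) * W0 ω)
    (hYdef : ∀ ω, Y ω = W ω * Y1 ω + (1 - W ω) * Y0 ω)
    (hindep : IndepFun Z (fun ω => (Y0 ω, Y1 ω, W0 ω, W1 ω)) P)
    (hoverlap : 0 < P {ω | Z ω = 1} ∧ P {ω | Z ω = 1} < 1)
    (hmono : ∀ᵐ ω ∂P, W0 ω ≤ W1 ω) :
    ∀ y : ℝ,
      condMean P (fun ω => W ω * (if Y ω ≤ y then (1 : ℝ) else 0)) {ω | Z ω = 1}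
        - condMean P (fun ω => W ω * (if Y ω ≤ y then (1 : ℝ) else 0)) {ω | Z ω = 0}
      = (P ({ω | Y1 ω ≤ y} ∩ {ω | W0 ω < W1 ω})).toReal := by
  intro y
  set V : Ω → ℝ × ℝ × ℝ × ℝ := fun ω => (Y0 ω, Y1 ω, W0 ω, W1 ω) with hV
  have hVmeas : Measurable V := by
    exact (hY0.prodMk (hY1.prodMk (hW0.prodMk hW1)))
  set g1 : Ω → ℝ := fun ω => W1 ω * (if Y1 ω ≤ y then (1:ℝ) else 0) with hg1def
  set g0 : Ω → ℝ := fun ω => W0 ω * (if Y1 ω ≤ y then (1:ℝ) else 0) with hg0def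
  -- measurability of ψ-style maps
  have hψ1 : Measurable (fun p : ℝ × ℝ × ℝ × ℝ => p.2.2.2 * (if p.2.1 ≤ y then (1:ℝ) else 0)) := by
    apply Measurable.mul (measurable_snd.comp (measurable_snd.comp measurable_snd))
    exact Measurable.ite (measurableSet_le (measurable_fst.comp measurable_snd) measurable_const)
      measurable_const measurable_const
  have hψ0 : Measurable (fun p : ℝ × ℝ × ℝ × ℝ => p.2.2.1 * (if p.2.1 ≤ y then (1:ℝ) else 0)) := by
    apply Measurable.mul (measurable_fst.comp (measurable_snd.comp measurable_snd))
    exact Measurable.ite (measurableSet_le (measurable_fst.comp measurable_snd) measurable_const)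
      measurable_const measurable_const
  have hg1meas : Measurable g1 := hψ1.comp hVmeas
  have hg0meas : Measurable g0 := hψ0.comp hVmeas
  have hbound : ∀ (Wt : Ω → ℝ), (∀ ω, Wt ω = 0 ∨ Wt ω = 1) →
      Integrable (fun ω => Wt ω * (if Y1 ω ≤ y then (1:ℝ) else 0)) P →
      True := fun _ _ _ => trivial
  have hint : ∀ (h : Ω → ℝ), Measurable h → (∀ ω, |h ω| ≤ 1) → Integrable h P := by
    intro h hm hb
    exact (integrable_const (1:ℝ)).mono' hm.aestronglyMeasurable (Filter.Eventually.of_forall hb)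
  have habs : ∀ (Wt : Ω → ℝ), (∀ ω, Wt ω = 0 ∨ Wt ω = 1) →
      ∀ ω, |Wt ω * (if Y1 ω ≤ y then (1:ℝ) else 0)| ≤ 1 := by
    intro Wt hbin ω
    rcases hbin ω with h | h <;> split <;> simp [h]
  have hg1int : Integrable g1 P := hint g1 hg1meas (habs W1 hW1bin)
  have hg0int : Integrable g0 P := hint g0 hg0meas (habs W0 hW0bin)
  -- sets
  have hA1 : MeasurableSet {ω | Z ω = 1} := hZ (measurableSet_singleton 1)
  have hA0 : MeasurableSet {ω | Z ω = 0} := hZ (measurableSet_singleton 0)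
  have hPA1 : P {ω | Z ω = 1} ≠ 0 := hoverlap.1.ne'
  have hPA0 : P {ω | Z ω = 0} ≠ 0 := by
    intro h
    have hcompl : {ω | Z ω = 0} = {ω | Z ω = 1}ᶜ := by
      ext ω; rcases hZbin ω with h1 | h1 <;> simp [h1]
    rw [hcompl, measure_compl hA1 (measure_ne_top P _), measure_univ] at h
    have := hoverlap.2
    have h1le : P {ω | Z ω = 1} ≤ 1 := prob_le_one
    rw [tsub_eq_zero_iff_le] at h
    exact hoverlap.2.ne (le_antisymm h1le h)
  -- indicator independence
  have hindic : ∀ c : ℝ, IndepFun ({ω | Z ω = c}.indicator (fun _ => (1:ℝ))) g1 P ∧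
      IndepFun ({ω | Z ω = c}.indicator (fun _ => (1:ℝ))) g0 P := by
    intro c
    have hφ : Measurable (fun x : ℝ => if x = c then (1:ℝ) else 0) := by
      exact Measurable.ite (measurableSet_singleton c) measurable_const measurable_const
    have hcomp1 : ({ω | Z ω = c}.indicator (fun _ => (1:ℝ)))
        = (fun x : ℝ => if x = c then (1:ℝ) else 0) ∘ Z := by
      ext ω; by_cases h : Z ω = c <;> simp [Set.indicator, h]
    constructor
    · have := hindep.comp hφ hψ1
      rwa [hcomp1]
    · have := hindep.comp hφ hψ0
      rwa [hcomp1]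
  -- pointwise equalities on the sets
  have hf1 : ∀ ω ∈ {ω | Z ω = 1}, W ω * (if Y ω ≤ y then (1:ℝ) else 0) = g1 ω := by
    intro ω hω
    have hz : Z ω = 1 := hω
    have hw : W ω = W1 ω := by rw [hWdef ω, hz]; ring
    rcases hW1bin ω with h | h
    · simp [hg1def, hw, h]
    · have hy : Y ω = Y1 ω := by rw [hYdef ω, hw, h]; ring
      simp [hg1def, hw, h, hy]
  have hf0 : ∀ ω ∈ {ω | Z ω = 0}, W ω * (if Y ω ≤ y then (1:ℝ) else 0) = g0 ω := by
    intro ω hω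
    have hz : Z ω = 0 := hω
    have hw : W ω = W0 ω := by rw [hWdef ω, hz]; ring
    rcases hW0bin ω with h | h
    · simp [hg0def, hw, h]
    · have hy : Y ω = Y1 ω := by rw [hYdef ω, hw, h]; ring
      simp [hg0def, hw, h, hy]
  rw [condMean_eq_integral P _ g1 _ hA1 hPA1 hf1 hg1int.aestronglyMeasurable (hindic 1).1,
      condMean_eq_integral P _ g0 _ hA0 hPA0 hf0 hg0int.aestronglyMeasurable (hindic 0).2]
  rw [← integral_sub hg1int hg0int]
  -- a.e. identification with the indicator of the target set
  set S : Set Ω := {ω | Y1 ω ≤ y} ∩ {ω | W0 ω < W1 ω} with hS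
  have hSmeas : MeasurableSet S :=
    (measurableSet_le hY1 measurable_const).inter (measurableSet_lt hW0 hW1)
  have key : ∀ ω, W0 ω ≤ W1 ω → g1 ω - g0 ω = S.indicator (fun _ => (1:ℝ)) ω := by
    intro ω hle
    simp only [hg1def, hg0def, Set.indicator_apply, hS, Set.mem_inter_iff, Set.mem_setOf_eq]
    rcases hW0bin ω with h0 | h0 <;> rcases hW1bin ω with h1 | h1
    · simp [h0, h1]
    · by_cases hy : Y1 ω ≤ y <;> simp [hy, h0, h1]
    · exfalso; rw [h0, h1] at hle; linarith
    · simp [h0, h1]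
  have hae : (fun ω => g1 ω - g0 ω) =ᵐ[P] S.indicator (fun _ => (1:ℝ)) := by
    filter_upwards [hmono] with ω hle using key ω hle
  rw [integral_congr_ae hae]
  exact integral_indicator_one (μ := P) hSmeas
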